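/- For any partition λ in P_{k,n} and any integer r with 0 ≤ r ≤ n, the quantity |λ| − |λ↑r| + rk is divisible by n, and (rk + |λ| − |λ↑r|)/n is a nonnegative integer at most min(k, r). -/

import Mathlib

/-- The first Seidel shift of a partition in `P_{k,n}`:
`λ↑1 = (λ₁+1, …, λ_k+1)` if `λ₁ < n-k`, and `(λ₂, …, λ_k, 0)` if `λ₁ = n-k`. -/
def seidelShift1 (n k : ℕ) (lam : Fin k → ℕ) : Fin k → ℕ :=
  if hk : 0 < k then
    if lam ⟨0, hk⟩ = n - k then
      fun i => if h : (i : ℕ) + 1 < k then lam ⟨(i : ℕ) + 1, h⟩ else 0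
    else fun i => lam i + 1
  else lam

/-- The `p`-th Seidel shift `λ↑p`. -/
def seidelShift (n k : ℕ) (p : ℕ) (lam : Fin k → ℕ) : Fin k → ℕ :=
  (seidelShift1 n k)^[p] lam

/-- The dual partition `λ^∨ = (n-k-λ_k, …, n-k-λ₁)`. -/
def dualPart (n k : ℕ) (lam : Fin k → ℕ) : Fin k → ℕ :=
  fun i => n - k - lam ⟨k - 1 - (i : ℕ), by have := i.isLt; omega⟩

/-- Number of "drop" steps among the first `r` Seidel shifts, computed as the
number of indices `i` with `λ_i + (k-1-i) ≥ n - r`. -/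
def Dcount (n k r : ℕ) (lam : Fin k → ℕ) : ℕ :=
  ∑ i : Fin k, if n - r ≤ lam i + (k - 1 - (i : ℕ)) then 1 else 0

lemma Dcount_key (n k : ℕ) (hk : 1 ≤ k) (hkn : k < n) :
    ∀ r (lam : Fin k → ℕ), Antitone lam → (∀ i, lam i ≤ n - k) → r ≤ n →
    (Dcount n k r lam : ℤ) * n = (r : ℤ) * k + (∑ i, (lam i : ℤ)) -
        ∑ i, (seidelShift n k r lam i : ℤ) := by
  obtain ⟨m, rfl⟩ : ∃ m, k = m + 1 := ⟨k - 1, by omega⟩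
  intro r
  induction r with
  | zero =>
    intro lam hanti hle _
    have hD : Dcount n (m + 1) 0 lam = 0 := by
      unfold Dcount
      apply Finset.sum_eq_zero
      intro i _
      have h1 := hle i
      have h2 := i.isLt
      rw [if_neg]
      omega
    simp [hD, seidelShift]
  | succ r ih =>
    intro lam hanti hle hr
    have hstep : seidelShift n (m + 1) (r + 1) lam
        = seidelShift n (m + 1) r (seidelShift1 n (m + 1) lam) := by
      simp [seidelShift, Function.iterate_succ_apply]
    have hk' : 0 < m + 1 := Nat.succ_pos m
    by_cases h0 : lam ⟨0, hk'⟩ = n - (m + 1)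
    · -- drop case
      set lam' : Fin (m+1) → ℕ :=
        fun i : Fin (m+1) => if h : (i : ℕ) + 1 < m + 1 then lam ⟨(i : ℕ) + 1, h⟩ else 0
        with hlam'
      have hsh : seidelShift1 n (m + 1) lam = lam' := by
        unfold seidelShift1
        rw [dif_pos hk', if_pos h0]
      have hanti' : Antitone lam' := by
        intro i j hij
        have hij' : (i : ℕ) ≤ (j : ℕ) := hij
        simp only [hlam']
        by_cases hj : (j : ℕ) + 1 < m + 1
        · have hi : (i : ℕ) + 1 < m + 1 := by omega
          rw [dif_pos hi, dif_pos hj]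
          exact hanti (Fin.mk_le_mk.mpr (by omega))
        · rw [dif_neg hj]; exact Nat.zero_le _
      have hle' : ∀ i, lam' i ≤ n - (m + 1) := by
        intro i
        simp only [hlam']
        by_cases hi : (i : ℕ) + 1 < m + 1
        · rw [dif_pos hi]; exact hle _
        · rw [dif_neg hi]; exact Nat.zero_le _
      have IH := ih lam' hanti' hle' (by omega)
      have hcast : ∀ i : Fin m, lam' i.castSucc = lam i.succ := by
        intro i
        have hi : ((i.castSucc : Fin (m+1)) : ℕ) + 1 < m + 1 := by
          simp only [Fin.coe_castSucc]; omega
        simp only [hlam']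
        rw [dif_pos hi]
        exact congrArg lam (Fin.ext (by simp))
      have hlast : lam' (Fin.last m) = 0 := by
        simp only [hlam']
        rw [dif_neg (by simp)]
      have h0v : lam (0 : Fin (m+1)) = n - (m + 1) := h0
      have hsum : (∑ i, (lam' i : ℤ)) = (∑ i, (lam i : ℤ)) - ((n : ℤ) - (m + 1)) := by
        rw [Fin.sum_univ_castSucc (f := fun i => (lam' i : ℤ)),
            Fin.sum_univ_succ (f := fun i => (lam i : ℤ))]
        rw [Finset.sum_congr rfl (fun i _ => by rw [hcast i]), hlast, h0v]
        push_cast [Nat.cast_sub (le_of_lt hkn)]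
        ring
      -- Dcount recurrence
      have hD : Dcount n (m + 1) (r + 1) lam = 1 + Dcount n (m + 1) r lam' := by
        unfold Dcount
        rw [Fin.sum_univ_succ (f := fun i : Fin (m+1) =>
              if n - (r+1) ≤ lam i + (m + 1 - 1 - (i : ℕ)) then 1 else 0),
            Fin.sum_univ_castSucc (f := fun i : Fin (m+1) =>
              if n - r ≤ lam' i + (m + 1 - 1 - (i : ℕ)) then 1 else 0)]
        have hc0 : n - (r+1) ≤ lam (0 : Fin (m+1)) + (m + 1 - 1 - ((0 : Fin (m+1)) : ℕ)) := by
          rw [h0v]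
          simp only [Fin.val_zero]
          omega
        have hclast : ¬ (n - r ≤ lam' (Fin.last m) + (m + 1 - 1 - ((Fin.last m) : ℕ))) := by
          rw [hlast]
          simp only [Fin.val_last]
          omega
        rw [if_pos hc0, if_neg hclast]
        have hmid : ∀ i : Fin m,
            (if n - (r+1) ≤ lam i.succ + (m + 1 - 1 - ((i.succ : Fin (m+1)) : ℕ)) then (1:ℕ) else 0)
            = (if n - r ≤ lam' i.castSucc + (m + 1 - 1 - ((i.castSucc : Fin (m+1)) : ℕ)) then (1:ℕ) else 0) := by
          intro i
          have hiv : (i : ℕ) < m := i.isLt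
          rw [hcast i]
          apply if_congr _ rfl rfl
          simp only [Fin.val_succ, Fin.coe_castSucc]
          omega
        rw [Finset.sum_congr rfl (fun i _ => hmid i)]
        ring
      rw [hstep, hsh, hD]
      push_cast
      push_cast at IH hsum
      linarith
    · -- non-drop case
      set lam' : Fin (m+1) → ℕ := fun i => lam i + 1 with hlam'
      have hsh : seidelShift1 n (m + 1) lam = lam' := by
        unfold seidelShift1
        rw [dif_pos hk', if_neg h0]
      have hanti' : Antitone lam' := by
        intro i j hij
        simp only [hlam']
        exact Nat.add_le_add_right (hanti hij) 1
      have hle' : ∀ i, lam' i ≤ n - (m + 1) := by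
        intro i
        have h1 : lam i ≤ lam ⟨0, hk'⟩ := hanti (Fin.mk_le_mk.mpr (Nat.zero_le _))
        have h2 := hle ⟨0, hk'⟩
        simp only [hlam']
        omega
      have IH := ih lam' hanti' hle' (by omega)
      have hsum : (∑ i, (lam' i : ℤ)) = (∑ i, (lam i : ℤ)) + (m + 1) := by
        simp only [hlam']
        push_cast
        rw [Finset.sum_add_distrib]
        simp
      have hD : Dcount n (m + 1) (r + 1) lam = Dcount n (m + 1) r lam' := by
        unfold Dcount
        apply Finset.sum_congr rfl
        intro i _
        apply if_congr _ rfl rfl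
        simp only [hlam']
        omega
      rw [hstep, hsh, hD]
      push_cast
      push_cast at IH hsum
      linarith

/-- For `0 ≤ r ≤ n`, `n` divides `rk + |λ| - |λ↑r|` and the
quotient is a nonnegative integer at most `min k r`. -/
theorem seidelShift_power (n k : ℕ) (hk : 1 ≤ k) (hkn : k < n)
    (lam : Fin k → ℕ) (hanti : Antitone lam) (hle : ∀ i, lam i ≤ n - k)
    (r : ℕ) (hr : r ≤ n) :
    ∃ d : ℕ, d ≤ min k r ∧
      (d : ℤ) * n = (r : ℤ) * k + (∑ i, (lam i : ℤ)) -
        ∑ i, (seidelShift n k r lam i : ℤ) := by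
  refine ⟨Dcount n k r lam, ?_, Dcount_key n k hk hkn r lam hanti hle hr⟩
  have hk1 : Dcount n k r lam ≤ k := by
    unfold Dcount
    calc ∑ i : Fin k, (if n - r ≤ lam i + (k - 1 - (i : ℕ)) then 1 else 0)
        ≤ ∑ _i : Fin k, 1 := Finset.sum_le_sum (fun i _ => by split <;> omega)
      _ = k := by simp
  have hk2 : Dcount n k r lam ≤ r := by
    unfold Dcount
    calc ∑ i : Fin k, (if n - r ≤ lam i + (k - 1 - (i : ℕ)) then 1 else 0)
        ≤ ∑ i : Fin k, (if (i : ℕ) < r then 1 else 0) := by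
          apply Finset.sum_le_sum
          intro i _
          have h1 := hle i
          have h2 := i.isLt
          split
          · rw [if_pos (by omega)]
          · split <;> omega
      _ = (Finset.filter (fun i : Fin k => (i : ℕ) < r) Finset.univ).card :=
          (Finset.card_filter _ _).symm
      _ ≤ (Finset.range r).card := by
          refine Finset.card_le_card_of_injOn (fun i => (i : ℕ)) ?_ ?_
          · intro i hi
            simp only [Finset.mem_coe, Finset.mem_filter] at hi
            exact Finset.mem_range.mpr hi.2
          · intro a _ b _ hab
            exact Fin.val_injective (by simpa using hab)
      _ = r := Finset.card_range r
  omega
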